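/- Let A : ℝ → ℝ be Lipschitz with constant L, let b : ℝ → ℝ be locally integrable, let I = (x₀ − r, x₀ + r), let α be a median of b on I, let 1 < p < ∞, and let f := |I|^{−1/p}(χ_{I₁} − χ_{I₂} − a χ_I) with I₁ := {x ∈ I : b(x) > α}, I₂ := {x ∈ I : b(x) < α}, a := (|I₁| − |I₂|)/|I|. Then for every y ∈ ℝ with dist(y, I) > 0, |∫_I K(y,z)(b(z) − α) f(z) dz| ≤ (5/2) |I|^{−1/p} dist(y, I)^{−1} ∫_I |b(z) − α| dz. -/

import Mathlib

open MeasureTheory Filter Set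

/-- The Cauchy kernel `K(x,y) = 1/(y - x + i(A(y) - A(x)))` associated to `A`. -/
noncomputable def cauchyKernel (A : ℝ → ℝ) (x y : ℝ) : ℂ :=
  ((y : ℂ) - (x : ℂ) + Complex.I * ((A y : ℂ) - (A x : ℂ)))⁻¹

/-- `α` is a median of `b` on the bounded interval `I`. -/
def IsMedian (b : ℝ → ℝ) (I : Set ℝ) (α : ℝ) : Prop :=
  volume {x | x ∈ I ∧ α < b x} ≤ volume I / 2 ∧
  volume {x | x ∈ I ∧ b x < α} ≤ volume I / 2

/-- Upper bound for `|∫_I K(y,z)(b(z) - α) f(z) dz|` for `y` with `dist(y, I) > 0`, where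
`f = |I|^{-1/p}(χ_{I₁} - χ_{I₂} - a χ_I)` is the median test function. -/
theorem median_test_function_upper_bound
    (A : ℝ → ℝ) (L : ℝ) (hL : 0 < L)
    (hA : ∀ x₁ x₂ : ℝ, |A x₁ - A x₂| ≤ L * |x₁ - x₂|)
    (b : ℝ → ℝ) (hb : MeasureTheory.LocallyIntegrable b volume)
    (x₀ r : ℝ) (hr : 0 < r)
    (I : Set ℝ) (hI : I = Set.Ioo (x₀ - r) (x₀ + r))
    (α : ℝ) (hα : IsMedian b I α)
    (p : ℝ) (hp : 1 < p)
    (I₁ I₂ : Set ℝ) (a : ℝ) (f : ℝ → ℝ)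
    (hI₁ : I₁ = {x | x ∈ I ∧ α < b x})
    (hI₂ : I₂ = {x | x ∈ I ∧ b x < α})
    (ha : a = ((volume I₁).toReal - (volume I₂).toReal) / (2 * r))
    (hf : f = fun y => (2 * r) ^ (-1 / p) *
        (Set.indicator I₁ (fun _ => (1 : ℝ)) y - Set.indicator I₂ (fun _ => (1 : ℝ)) y -
          a * Set.indicator I (fun _ => (1 : ℝ)) y)) :
    ∀ y : ℝ, 0 < Metric.infDist y I →
      ‖∫ z in I, cauchyKernel A y z * (((b z - α) : ℝ) : ℂ) * ((f z : ℝ) : ℂ)‖ ≤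
        5 / 2 * (2 * r) ^ (-1 / p) * (Metric.infDist y I)⁻¹ * (∫ z in I, |b z - α|) := by
  intro y hy
  set d := Metric.infDist y I with hd
  have hr2 : (0:ℝ) < 2 * r := by linarith
  have hIvol : volume I = ENNReal.ofReal (2 * r) := by
    rw [hI, Real.volume_Ioo]; ring_nf
  have hmeasI : MeasurableSet I := by rw [hI]; exact measurableSet_Ioo
  have hrp : (0:ℝ) < (2 * r) ^ (-1 / p) := Real.rpow_pos_of_pos hr2 _
  -- bound on a
  have hhalf : volume I / 2 = ENNReal.ofReal r := by
    rw [hIvol, show (2:ENNReal) = ENNReal.ofReal 2 by norm_num,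
      ← ENNReal.ofReal_div_of_pos two_pos]
    norm_num
  have hv1 : (volume I₁).toReal ≤ r := by
    have h1 : volume I₁ ≤ ENNReal.ofReal r := by rw [← hhalf, hI₁]; exact hα.1
    calc (volume I₁).toReal ≤ (ENNReal.ofReal r).toReal :=
          ENNReal.toReal_mono ENNReal.ofReal_ne_top h1
      _ = r := ENNReal.toReal_ofReal hr.le
  have hv2 : (volume I₂).toReal ≤ r := by
    have h1 : volume I₂ ≤ ENNReal.ofReal r := by rw [← hhalf, hI₂]; exact hα.2
    calc (volume I₂).toReal ≤ (ENNReal.ofReal r).toReal :=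
          ENNReal.toReal_mono ENNReal.ofReal_ne_top h1
      _ = r := ENNReal.toReal_ofReal hr.le
  have hanon1 : (0:ℝ) ≤ (volume I₁).toReal := ENNReal.toReal_nonneg
  have hanon2 : (0:ℝ) ≤ (volume I₂).toReal := ENNReal.toReal_nonneg
  have ha' : |a| ≤ 1 / 2 := by
    rw [ha, abs_div, abs_of_pos hr2, div_le_div_iff₀ hr2 two_pos]
    have habs : |(volume I₁).toReal - (volume I₂).toReal| ≤ r := by
      rw [abs_sub_le_iff]; constructor <;> linarith
    nlinarith
  -- pointwise bound on f
  have hfz : ∀ z, |f z| ≤ (2 * r) ^ (-1 / p) * (5 / 2) := by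
    intro z
    rw [hf]
    simp only [abs_mul, abs_of_pos hrp]
    apply mul_le_mul_of_nonneg_left _ hrp.le
    have h1 : |Set.indicator I₁ (fun _ => (1:ℝ)) z| ≤ 1 := by
      unfold Set.indicator; split <;> norm_num
    have h2 : |Set.indicator I₂ (fun _ => (1:ℝ)) z| ≤ 1 := by
      unfold Set.indicator; split <;> norm_num
    have h3 : |Set.indicator I (fun _ => (1:ℝ)) z| ≤ 1 := by
      unfold Set.indicator; split <;> norm_num
    calc |Set.indicator I₁ (fun _ => (1:ℝ)) z - Set.indicator I₂ (fun _ => (1:ℝ)) z -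
            a * Set.indicator I (fun _ => (1:ℝ)) z|
        ≤ |Set.indicator I₁ (fun _ => (1:ℝ)) z - Set.indicator I₂ (fun _ => (1:ℝ)) z| +
            |a * Set.indicator I (fun _ => (1:ℝ)) z| := abs_sub _ _
      _ ≤ (|Set.indicator I₁ (fun _ => (1:ℝ)) z| + |Set.indicator I₂ (fun _ => (1:ℝ)) z|) +
            |a| * |Set.indicator I (fun _ => (1:ℝ)) z| := by
          rw [abs_mul]; exact add_le_add (abs_sub _ _) le_rfl
      _ ≤ (1 + 1) + (1/2) * 1 := by
          have : |a| * |Set.indicator I (fun _ => (1:ℝ)) z| ≤ (1/2) * 1 :=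
            mul_le_mul ha' h3 (abs_nonneg _) (by norm_num)
          linarith
      _ = 5 / 2 := by norm_num
  -- integrability of the dominating function
  have hbI : IntegrableOn b I volume := by
    have h1 : IntegrableOn b (Set.Icc (x₀ - r) (x₀ + r)) volume :=
      hb.integrableOn_isCompact isCompact_Icc
    exact h1.mono_set (by rw [hI]; exact Set.Ioo_subset_Icc_self)
  have habs : IntegrableOn (fun z => |b z - α|) I volume := by
    have : IntegrableOn (fun z => b z - α) I volume :=
      hbI.sub (integrableOn_const (by rw [hIvol]; exact ENNReal.ofReal_ne_top))
    exact this.abs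
  have hgint : Integrable (fun z => 5 / 2 * (2 * r) ^ (-1 / p) * d⁻¹ * |b z - α|)
      (volume.restrict I) := habs.const_mul _
  -- pointwise bound
  have key : ∀ᵐ z ∂(volume.restrict I),
      ‖cauchyKernel A y z * (((b z - α) : ℝ) : ℂ) * ((f z : ℝ) : ℂ)‖ ≤
        5 / 2 * (2 * r) ^ (-1 / p) * d⁻¹ * |b z - α| := by
    rw [ae_restrict_iff' hmeasI]
    filter_upwards with z hz
    have hdz : d ≤ |z - y| := by
      have := Metric.infDist_le_dist_of_mem (x := y) hz
      rwa [Real.dist_eq, abs_sub_comm] at this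
    have hK : ‖cauchyKernel A y z‖ ≤ d⁻¹ := by
      rw [cauchyKernel, norm_inv]
      apply inv_anti₀ hy
      calc d ≤ |z - y| := hdz
        _ = |((z:ℂ) - y + Complex.I * ((A z : ℂ) - A y)).re| := by
            simp [Complex.add_re, Complex.sub_re, Complex.mul_re]
        _ ≤ ‖(z:ℂ) - y + Complex.I * ((A z : ℂ) - A y)‖ := Complex.abs_re_le_norm _
    rw [norm_mul, norm_mul, Complex.norm_real, Complex.norm_real,
      Real.norm_eq_abs, Real.norm_eq_abs]
    calc ‖cauchyKernel A y z‖ * |b z - α| * |f z|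
        ≤ d⁻¹ * |b z - α| * ((2 * r) ^ (-1 / p) * (5 / 2)) := by
          gcongr
          exact hfz z
      _ = 5 / 2 * (2 * r) ^ (-1 / p) * d⁻¹ * |b z - α| := by ring
  calc ‖∫ z in I, cauchyKernel A y z * (((b z - α) : ℝ) : ℂ) * ((f z : ℝ) : ℂ)‖
      ≤ ∫ z in I, 5 / 2 * (2 * r) ^ (-1 / p) * d⁻¹ * |b z - α| :=
        norm_integral_le_of_norm_le hgint key
    _ = 5 / 2 * (2 * r) ^ (-1 / p) * d⁻¹ * ∫ z in I, |b z - α| := integral_const_mul _ _
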